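/- If additionally f is strongly convex with modulus σ > 0, randomized coordinate descent with steplength 1/L_max satisfies the linear rate E[f(x^k)] - f* ≤ (1 - σ/(n·L_max))^k (f(x⁰) - f*). -/

import Mathlib

open Finset

/-- Quadratic upper bound for a 1D function with Lipschitz-type derivative bound. -/
lemma quad_bound (φ ψ : ℝ → ℝ) (L : ℝ) (hL : 0 < L)
    (hφ : ∀ t, HasDerivAt φ (ψ t) t)
    (hLip : ∀ t, |ψ t - ψ 0| ≤ L * |t|) (t : ℝ) :
    φ t ≤ φ 0 + ψ 0 * t + L / 2 * t ^ 2 := by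
  set h : ℝ → ℝ := fun s => φ 0 + ψ 0 * s + L / 2 * s ^ 2 - φ s with hh
  have hd : ∀ s, HasDerivAt h (ψ 0 + L * s - ψ s) s := by
    intro s
    have h1 : HasDerivAt (fun s : ℝ => φ 0 + ψ 0 * s + L / 2 * s ^ 2)
        (ψ 0 + L * s) s := by
      have := ((hasDerivAt_id s).const_mul (ψ 0)).const_add (φ 0)
      have h2 := ((hasDerivAt_pow 2 s).const_mul (L / 2))
      refine (this.add h2).congr_deriv ?_
      ring
    exact h1.sub (hφ s)
  have hderiv : ∀ s, deriv h s = ψ 0 + L * s - ψ s := fun s => (hd s).deriv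
  have key : 0 ≤ h t := by
    rcases le_or_gt 0 t with ht | ht
    · have hmono : MonotoneOn h (Set.Icc 0 t) := by
        apply monotoneOn_of_deriv_nonneg (convex_Icc 0 t)
        · exact fun s _ => (hd s).continuousAt.continuousWithinAt
        · exact fun s _ => ((hd s).differentiableAt).differentiableWithinAt
        · intro s hs
          rw [hderiv]
          rw [interior_Icc] at hs
          have := hLip s
          have hs0 : 0 ≤ s := le_of_lt hs.1
          have : |ψ s - ψ 0| ≤ L * s := by rwa [abs_of_nonneg hs0] at this
          have := abs_le.mp this
          linarith [this.2]
      have h0 : h 0 = 0 := by simp [hh]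
      have := hmono (Set.left_mem_Icc.mpr ht) (Set.mem_Icc.mpr ⟨ht, le_refl t⟩) ht
      · rw [h0] at this; exact this
    · have hmono : AntitoneOn h (Set.Icc t 0) := by
        apply antitoneOn_of_deriv_nonpos (convex_Icc t 0)
        · exact fun s _ => (hd s).continuousAt.continuousWithinAt
        · exact fun s _ => ((hd s).differentiableAt).differentiableWithinAt
        · intro s hs
          rw [hderiv]
          rw [interior_Icc] at hs
          have := hLip s
          have hs0 : s ≤ 0 := le_of_lt hs.2
          have : |ψ s - ψ 0| ≤ L * (-s) := by rwa [abs_of_nonpos hs0] at this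
          have := abs_le.mp this
          linarith [this.1]
      have h0 : h 0 = 0 := by simp [hh]
      have := hmono (Set.mem_Icc.mpr ⟨le_refl t, le_of_lt ht⟩) (Set.right_mem_Icc.mpr (le_of_lt ht)) (le_of_lt ht)
      rw [h0] at this; exact this
  simp only [hh] at key
  linarith

lemma line_deriv {n : ℕ} (f : EuclideanSpace ℝ (Fin n) → ℝ)
    (g : EuclideanSpace ℝ (Fin n) → EuclideanSpace ℝ (Fin n))
    (hdiff : ∀ x, HasGradientAt f (g x) x)
    (x : EuclideanSpace ℝ (Fin n)) (i : Fin n) (t : ℝ) :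
    HasDerivAt (fun s : ℝ => f (x + s • EuclideanSpace.single i 1))
      (g (x + t • EuclideanSpace.single i 1) i) t := by
  have hline : HasDerivAt (fun s : ℝ => x + s • EuclideanSpace.single i (1:ℝ))
      (EuclideanSpace.single i (1:ℝ)) t := by
    simpa using ((hasDerivAt_id t).smul_const (EuclideanSpace.single i (1:ℝ))).const_add x
  have hF := (hdiff (x + t • EuclideanSpace.single i 1)).hasFDerivAt
  have := hF.comp_hasDerivAt t hline
  refine this.congr_deriv ?_
  simp [InnerProductSpace.toDual_apply_apply, EuclideanSpace.inner_single_right]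

lemma descent_lemma {n : ℕ} (f : EuclideanSpace ℝ (Fin n) → ℝ)
    (g : EuclideanSpace ℝ (Fin n) → EuclideanSpace ℝ (Fin n))
    (hdiff : ∀ x, HasGradientAt f (g x) x)
    (Lmax : ℝ) (hLmax : 0 < Lmax)
    (hLip : ∀ (x : EuclideanSpace ℝ (Fin n)) (i : Fin n) (t : ℝ),
      |g (x + t • EuclideanSpace.single i 1) i - g x i| ≤ Lmax * |t|)
    (x : EuclideanSpace ℝ (Fin n)) (i : Fin n) (t : ℝ) :
    f (x + t • EuclideanSpace.single i 1) ≤ f x + g x i * t + Lmax / 2 * t ^ 2 := by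
  have hq := quad_bound (fun s => f (x + s • EuclideanSpace.single i 1))
    (fun s => g (x + s • EuclideanSpace.single i 1) i) Lmax hLmax
    (line_deriv f g hdiff x i)
    (by intro s; simpa using hLip x i s) t
  simpa using hq

lemma descent_step {n : ℕ} (f : EuclideanSpace ℝ (Fin n) → ℝ)
    (g : EuclideanSpace ℝ (Fin n) → EuclideanSpace ℝ (Fin n))
    (hdiff : ∀ x, HasGradientAt f (g x) x)
    (Lmax : ℝ) (hLmax : 0 < Lmax)
    (hLip : ∀ (x : EuclideanSpace ℝ (Fin n)) (i : Fin n) (t : ℝ),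
      |g (x + t • EuclideanSpace.single i 1) i - g x i| ≤ Lmax * |t|)
    (x : EuclideanSpace ℝ (Fin n)) (i : Fin n) :
    f (x - (1 / Lmax) • g x i • EuclideanSpace.single i 1)
      ≤ f x - (g x i) ^ 2 / (2 * Lmax) := by
  have hq := descent_lemma f g hdiff Lmax hLmax hLip x i (-(g x i) / Lmax)
  have hx : x + (-(g x i) / Lmax) • EuclideanSpace.single i (1:ℝ)
      = x - (1 / Lmax) • g x i • EuclideanSpace.single i 1 := by
    rw [smul_smul, sub_eq_add_neg, ← neg_smul]
    ring_nf
  rw [hx] at hq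
  have : f x + g x i * (-(g x i) / Lmax) + Lmax / 2 * (-(g x i) / Lmax) ^ 2
      = f x - (g x i) ^ 2 / (2 * Lmax) := by
    field_simp
    ring
  linarith [hq, this.le]

lemma pl_ineq {n : ℕ} (f : EuclideanSpace ℝ (Fin n) → ℝ)
    (g : EuclideanSpace ℝ (Fin n) → EuclideanSpace ℝ (Fin n))
    (σ : ℝ) (hσ : 0 < σ)
    (hsc : ∀ x y, f x + (inner ℝ (g x) (y - x) : ℝ) + σ / 2 * ‖y - x‖ ^ 2 ≤ f y)
    (fstar : ℝ) (hattain : ∃ x, f x = fstar)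
    (x : EuclideanSpace ℝ (Fin n)) :
    f x - fstar ≤ ‖g x‖ ^ 2 / (2 * σ) := by
  obtain ⟨xs, hxs⟩ := hattain
  have h := hsc x xs
  rw [hxs] at h
  have hinner : -(‖g x‖ * ‖xs - x‖) ≤ (inner ℝ (g x) (xs - x) : ℝ) := by
    have := abs_real_inner_le_norm (g x) (xs - x)
    have := abs_le.mp this
    linarith [this.1]
  rw [le_div_iff₀ (by positivity : (0:ℝ) < 2 * σ)]
  nlinarith [sq_nonneg (‖g x‖ - σ * ‖xs - x‖), hσ, h, hinner]

lemma norm_sq_coords {n : ℕ} (v : EuclideanSpace ℝ (Fin n)) :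
    ‖v‖ ^ 2 = ∑ i : Fin n, (v i) ^ 2 := by
  rw [EuclideanSpace.norm_eq, Real.sq_sqrt]
  · simp [sq_abs]
  · positivity

lemma step_sum {n : ℕ} (hn : 0 < n) (f : EuclideanSpace ℝ (Fin n) → ℝ)
    (g : EuclideanSpace ℝ (Fin n) → EuclideanSpace ℝ (Fin n))
    (hdiff : ∀ x, HasGradientAt f (g x) x)
    (σ : ℝ) (hσ : 0 < σ)
    (hsc : ∀ x y, f x + (inner ℝ (g x) (y - x) : ℝ) + σ / 2 * ‖y - x‖ ^ 2 ≤ f y)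
    (Lmax : ℝ) (hLmax : 0 < Lmax)
    (hLip : ∀ (x : EuclideanSpace ℝ (Fin n)) (i : Fin n) (t : ℝ),
      |g (x + t • EuclideanSpace.single i 1) i - g x i| ≤ Lmax * |t|)
    (fstar : ℝ) (hattain : ∃ x, f x = fstar)
    (x : EuclideanSpace ℝ (Fin n)) :
    ∑ i : Fin n, f (x - (1 / Lmax) • g x i • EuclideanSpace.single i 1)
      ≤ n * f x - σ / Lmax * (f x - fstar) := by
  have h1 : ∑ i : Fin n, f (x - (1 / Lmax) • g x i • EuclideanSpace.single i 1)
      ≤ ∑ i : Fin n, (f x - (g x i) ^ 2 / (2 * Lmax)) :=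
    Finset.sum_le_sum fun i _ => descent_step f g hdiff Lmax hLmax hLip x i
  have h2 : ∑ i : Fin n, (f x - (g x i) ^ 2 / (2 * Lmax))
      = n * f x - ‖g x‖ ^ 2 / (2 * Lmax) := by
    rw [Finset.sum_sub_distrib, Finset.sum_const, norm_sq_coords]
    simp [Finset.sum_div]
  have hpl := pl_ineq f g σ hσ hsc fstar hattain x
  have hg2 : 2 * σ * (f x - fstar) ≤ ‖g x‖ ^ 2 := by
    have := mul_le_mul_of_nonneg_left hpl (le_of_lt (by positivity : (0:ℝ) < 2 * σ))
    calc 2 * σ * (f x - fstar) ≤ 2 * σ * (‖g x‖ ^ 2 / (2 * σ)) := this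
    _ = ‖g x‖ ^ 2 := by field_simp
  calc ∑ i : Fin n, f (x - (1 / Lmax) • g x i • EuclideanSpace.single i 1)
      ≤ n * f x - ‖g x‖ ^ 2 / (2 * Lmax) := by rw [← h2]; exact h1
    _ ≤ n * f x - σ / Lmax * (f x - fstar) := by
        have : σ / Lmax * (f x - fstar) ≤ ‖g x‖ ^ 2 / (2 * Lmax) := by
          rw [div_mul_eq_mul_div, div_le_div_iff₀ hLmax (by positivity : (0:ℝ) < 2 * Lmax)]
          nlinarith [mul_le_mul_of_nonneg_right hg2 hLmax.le]
        linarith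

lemma sigma_le_Lmax {n : ℕ} (hn : 0 < n) (f : EuclideanSpace ℝ (Fin n) → ℝ)
    (g : EuclideanSpace ℝ (Fin n) → EuclideanSpace ℝ (Fin n))
    (hdiff : ∀ x, HasGradientAt f (g x) x)
    (σ : ℝ) (hσ : 0 < σ)
    (hsc : ∀ x y, f x + (inner ℝ (g x) (y - x) : ℝ) + σ / 2 * ‖y - x‖ ^ 2 ≤ f y)
    (Lmax : ℝ) (hLmax : 0 < Lmax)
    (hLip : ∀ (x : EuclideanSpace ℝ (Fin n)) (i : Fin n) (t : ℝ),
      |g (x + t • EuclideanSpace.single i 1) i - g x i| ≤ Lmax * |t|)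
    (fstar : ℝ) (hfstar : ∀ x, fstar ≤ f x) (hattain : ∃ x, f x = fstar) :
    σ ≤ Lmax := by
  obtain ⟨xs, hxs⟩ := hattain
  have hg0 : ∀ i, g xs i = 0 := by
    intro i
    have h1 := descent_step f g hdiff Lmax hLmax hLip xs i
    have h2 := hfstar (xs - (1 / Lmax) • g xs i • EuclideanSpace.single i 1)
    rw [hxs] at h1
    have : (g xs i) ^ 2 / (2 * Lmax) ≤ 0 := by linarith
    have h3 : (g xs i) ^ 2 ≤ 0 := by
      by_contra hc
      push_neg at hc
      have : 0 < (g xs i) ^ 2 / (2 * Lmax) := by positivity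
      linarith
    nlinarith [sq_nonneg (g xs i)]
  have hgz : g xs = 0 := by
    ext i
    exact hg0 i
  set e := EuclideanSpace.single (⟨0, hn⟩ : Fin n) (1:ℝ) with he
  have h1 := hsc xs (xs + e)
  have h2 := descent_lemma f g hdiff Lmax hLmax hLip xs ⟨0, hn⟩ 1
  rw [hxs, hgz] at h1
  rw [hxs, hg0] at h2
  simp only [one_smul, ← he] at h2
  have hnorm : ‖xs + e - xs‖ = 1 := by
    simp [he]
  rw [add_sub_cancel_left] at h1
  have hnorm' : ‖e‖ = (1:ℝ) := by simp [he]
  rw [hnorm'] at h1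
  simp only [inner_zero_left] at h1
  nlinarith [h1, h2]

/-- Linear rate of randomized coordinate descent for a strongly convex function:
`E[f(x^k)] - f* ≤ (1 - σ/(n Lmax))^k (f(x⁰) - f*)`. -/
theorem rcd_linear_rate (n : ℕ) (hn : 0 < n)
    (f : EuclideanSpace ℝ (Fin n) → ℝ)
    (g : EuclideanSpace ℝ (Fin n) → EuclideanSpace ℝ (Fin n))
    (hdiff : ∀ x, HasGradientAt f (g x) x)
    (σ : ℝ) (hσ : 0 < σ)
    (hsc : ∀ x y, f x + (inner ℝ (g x) (y - x) : ℝ) + σ / 2 * ‖y - x‖ ^ 2 ≤ f y)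
    (Lmax : ℝ) (hLmax : 0 < Lmax)
    (hLip : ∀ (x : EuclideanSpace ℝ (Fin n)) (i : Fin n) (t : ℝ),
      |g (x + t • EuclideanSpace.single i 1) i - g x i| ≤ Lmax * |t|)
    (fstar : ℝ) (hfstar : ∀ x, fstar ≤ f x) (hattain : ∃ x, f x = fstar)
    (x0 : EuclideanSpace ℝ (Fin n))
    (X : (ℕ → Fin n) → ℕ → EuclideanSpace ℝ (Fin n))
    (hX0 : ∀ ω, X ω 0 = x0)
    (hXs : ∀ ω k, X ω (k + 1) =
      X ω k - (1 / Lmax) • (g (X ω k) (ω k)) • EuclideanSpace.single (ω k) 1)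
    (k : ℕ) :
    ((n : ℝ) ^ k)⁻¹ *
        (∑ ω : Fin k → Fin n,
          f (X (fun j => if h : j < k then ω ⟨j, h⟩ else ⟨0, hn⟩) k)) - fstar
      ≤ (1 - σ / (n * Lmax)) ^ k * (f x0 - fstar) := by
  have hnR : (0:ℝ) < n := Nat.cast_pos.mpr hn
  have hX_congr : ∀ (m : ℕ) (ω ω' : ℕ → Fin n),
      (∀ j, j < m → ω j = ω' j) → X ω m = X ω' m := by
    intro m
    induction m with
    | zero => intro ω ω' _; rw [hX0, hX0]
    | succ m ih =>
      intro ω ω' h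
      have hk : X ω m = X ω' m := ih ω ω' fun j hj => h j (hj.trans (Nat.lt_succ_self m))
      rw [hXs, hXs, hk, h m (Nat.lt_succ_self m)]
  have hσL : σ ≤ Lmax := sigma_le_Lmax hn f g hdiff σ hσ hsc Lmax hLmax hLip fstar hfstar hattain
  have hρ : σ / (n * Lmax) ≤ 1 := by
    rw [div_le_one (by positivity)]
    calc σ ≤ Lmax := hσL
    _ = 1 * Lmax := (one_mul Lmax).symm
    _ ≤ n * Lmax := by
        apply mul_le_mul_of_nonneg_right _ hLmax.le
        exact_mod_cast hn
  induction k with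
  | zero =>
    simp [hX0]
  | succ k ih =>
    -- notation
    set r : ℝ := 1 - σ / (n * Lmax) with hr
    have hr0 : 0 ≤ r := by simp [hr]; linarith
    set y : (Fin k → Fin n) → EuclideanSpace ℝ (Fin n) :=
      fun τ => X (fun j => if h : j < k then τ ⟨j, h⟩ else ⟨0, hn⟩) k with hy
    set A : ℝ := ∑ τ : Fin k → Fin n, f (y τ) with hA
    -- rewrite the sum over (k+1)-tuples
    have hsum : (∑ ω : Fin (k+1) → Fin n,
          f (X (fun j => if h : j < k+1 then ω ⟨j, h⟩ else ⟨0, hn⟩) (k+1)))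
        = ∑ τ : Fin k → Fin n, ∑ i : Fin n,
            f (y τ - (1 / Lmax) • (g (y τ) i) • EuclideanSpace.single i 1) := by
      rw [← Fintype.sum_equiv (Fin.snocEquiv fun _ : Fin (k+1) => Fin n)
        (fun p => f (X (fun j => if h : j < k+1 then (Fin.snoc p.2 p.1 : Fin (k+1) → Fin n) ⟨j, h⟩ else ⟨0, hn⟩) (k+1)))
        (fun ω => f (X (fun j => if h : j < k+1 then ω ⟨j, h⟩ else ⟨0, hn⟩) (k+1)))
        (fun p => by simp only [Fin.snocEquiv_apply])]
      rw [Fintype.sum_prod_type]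
      rw [Finset.sum_comm]
      apply Finset.sum_congr rfl
      intro τ _
      apply Finset.sum_congr rfl
      intro i _
      set ω' : ℕ → Fin n :=
        fun j => if h : j < k+1 then (Fin.snoc τ i : Fin (k+1) → Fin n) ⟨j, h⟩ else ⟨0, hn⟩ with hω'
      have hlast : ω' k = i := by
        simp [hω', Fin.snoc, Nat.lt_succ_self]
      have hXk : X ω' k = y τ := by
        apply hX_congr
        intro j hj
        simp only [hω', dif_pos (hj.trans (Nat.lt_succ_self k)), dif_pos hj]
        simp [Fin.snoc, hj]
      rw [hXs, hlast, hXk]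
    rw [hsum]
    -- bound the inner sums
    have hbound : ∀ τ : Fin k → Fin n,
        (∑ i : Fin n, f (y τ - (1 / Lmax) • (g (y τ) i) • EuclideanSpace.single i 1))
          ≤ n * f (y τ) - σ / Lmax * (f (y τ) - fstar) :=
      fun τ => step_sum hn f g hdiff σ hσ hsc Lmax hLmax hLip fstar hattain (y τ)
    have hS : (∑ τ : Fin k → Fin n, ∑ i : Fin n,
          f (y τ - (1 / Lmax) • (g (y τ) i) • EuclideanSpace.single i 1))
        ≤ n * A - σ / Lmax * A + σ / Lmax * (n:ℝ)^k * fstar := by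
      calc _ ≤ ∑ τ : Fin k → Fin n, ((n:ℝ) * f (y τ) - σ / Lmax * (f (y τ) - fstar)) :=
            Finset.sum_le_sum fun τ _ => hbound τ
      _ = n * A - σ / Lmax * A + σ / Lmax * (n:ℝ)^k * fstar := by
            rw [hA]
            rw [Finset.sum_sub_distrib, ← Finset.mul_sum]
            have : ∑ τ : Fin k → Fin n, (σ / Lmax * (f (y τ) - fstar))
                = σ / Lmax * ((∑ τ : Fin k → Fin n, f (y τ)) - (n:ℝ)^k * fstar) := by
              rw [← Finset.mul_sum, Finset.sum_sub_distrib, Finset.sum_const]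
              congr 2
              simp [Finset.card_univ, mul_comm]
            rw [this]
            ring
    have hpos : (0:ℝ) ≤ ((n:ℝ)^(k+1))⁻¹ := by positivity
    have h1 := mul_le_mul_of_nonneg_left hS hpos
    have h2 : ((n:ℝ)^(k+1))⁻¹ * ((n:ℝ) * A - σ / Lmax * A + σ / Lmax * (n:ℝ)^k * fstar) - fstar
        = r * (((n:ℝ)^k)⁻¹ * A - fstar) := by
      have hnne : (n:ℝ) ≠ 0 := ne_of_gt hnR
      have hLne : Lmax ≠ 0 := ne_of_gt hLmax
      rw [hr]
      field_simp
      ring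
    have h3 : r * (((n:ℝ)^k)⁻¹ * A - fstar) ≤ r * (r ^ k * (f x0 - fstar)) :=
      mul_le_mul_of_nonneg_left ih hr0
    calc ((n:ℝ)^(k+1))⁻¹ * (∑ τ : Fin k → Fin n, ∑ i : Fin n,
          f (y τ - (1 / Lmax) • (g (y τ) i) • EuclideanSpace.single i 1)) - fstar
        ≤ ((n:ℝ)^(k+1))⁻¹ * ((n:ℝ) * A - σ / Lmax * A + σ / Lmax * (n:ℝ)^k * fstar) - fstar := by
          linarith
      _ = r * (((n:ℝ)^k)⁻¹ * A - fstar) := h2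
      _ ≤ r * (r ^ k * (f x0 - fstar)) := h3
      _ = r ^ (k+1) * (f x0 - fstar) := by ring
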